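/- arXiv:2012.13822 — 2 statements merged into one kernel-verified Lean document; each statement's English description precedes it below -/
import Mathlib

section
/- Let n be a nonnegative integer, let p, q be nonnegative integers, and let a, c, x, a_1, …, a_p, b_1, …, b_q be complex numbers such that (a)_n ≠ 0, (1+a−c)_n ≠ 0, (c)_n ≠ 0, and (b_j)_n ≠ 0 for each j. Then the terminating series _{p+3}F_{q+3}(−n, a/2, (a+1)/2, a_1, …, a_p ; a, 1+a−c, c, b_1, …, b_q ; x) equals the double sum Σ_{m=0}^{n} [ (−n)_m (a_1)_m ⋯ (a_p)_m (x/4)^m / ( m! (1+a−c)_m (b_1)_m ⋯ (b_q)_m ) ] · _{p+1}F_{q+1}(−n+m, a_1+m, …, a_p+m ; c, b_1+m, …, b_q+m ; x/4), where the inner series is the finite sum over t from 0 to n−m. -/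
open Finset

/-- The rising factorial (Pochhammer symbol) `(a)_k = a(a+1)⋯(a+k-1)`. -/
noncomputable def poch (a : ℂ) (k : ℕ) : ℂ := ∏ i ∈ Finset.range k, (a + i)

lemma poch_succ (z : ℂ) (k : ℕ) : poch z (k + 1) = poch z k * (z + k) := by
  unfold poch; rw [Finset.prod_range_succ]

lemma poch_add (z : ℂ) (m t : ℕ) : poch z (m + t) = poch z m * poch (z + m) t := by
  unfold poch
  rw [Finset.prod_range_add]
  congr 1
  refine Finset.prod_congr rfl fun i _ => ?_
  push_cast; ring

lemma poch_ne_zero_of_le {z : ℂ} {m n : ℕ} (h : m ≤ n) (hz : poch z n ≠ 0) : poch z m ≠ 0 := by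
  intro h0
  apply hz
  have hn : n = m + (n - m) := by omega
  rw [hn, poch_add, h0, zero_mul]

lemma poch_shift_ne_zero {z : ℂ} {m t n : ℕ} (h : m + t ≤ n) (hz : poch z n ≠ 0) :
    poch (z + m) t ≠ 0 := by
  have h1 : poch z (m + t) ≠ 0 := poch_ne_zero_of_le h hz
  rw [poch_add] at h1
  exact right_ne_zero_of_mul h1

noncomputable def dpoch (z : ℂ) (k : ℕ) : ℂ := ∏ i ∈ Finset.range k, (z - i)

lemma poch_eq_dpoch (z : ℂ) (k : ℕ) : poch z k = dpoch (z + k - 1) k := by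
  unfold poch dpoch
  rw [← Finset.prod_range_reflect]
  refine Finset.prod_congr rfl fun i hi => ?_
  rw [Finset.mem_range] at hi
  have h1 : ((k - 1 - i : ℕ) : ℂ) = (k : ℂ) - 1 - i := by
    have : i + 1 ≤ k := hi
    push_cast [Nat.cast_sub (by omega : 1 + i ≤ k), Nat.sub_sub]
    ring
  rw [h1]; ring

lemma dpoch_eq_smeval (z : ℂ) (k : ℕ) : dpoch z k = (descPochhammer ℤ k).smeval z := by
  induction k with
  | zero => simp [dpoch]
  | succ k ih =>
    rw [descPochhammer_succ_right, Polynomial.smeval_mul, ← ih]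
    unfold dpoch
    rw [Finset.prod_range_succ]
    simp [Polynomial.smeval_sub, Polynomial.smeval_X, Polynomial.smeval_natCast, dpoch]

lemma dpoch_add_eq (r s : ℂ) (k : ℕ) :
    dpoch (r + s) k = ∑ m ∈ range (k + 1), (k.choose m : ℂ) * (dpoch r m * dpoch s (k - m)) := by
  rw [dpoch_eq_smeval, Ring.descPochhammer_smeval_add k (Commute.all r s),
    Finset.Nat.sum_antidiagonal_eq_sum_range_succ_mk]
  exact Finset.sum_congr rfl fun m hm => by rw [dpoch_eq_smeval, dpoch_eq_smeval]

lemma poch_conv (a c : ℂ) (k : ℕ) :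
    ∑ m ∈ range (k + 1),
      (k.choose m : ℂ) * (poch (c + ((k - m : ℕ) : ℂ)) m * poch ((1 + a - c) + m) (k - m))
      = poch (a + k) k := by
  rw [poch_eq_dpoch]
  have key : a + (k : ℂ) + k - 1 = (c + k - 1) + ((1 + a - c) + k - 1) := by ring
  rw [key, dpoch_add_eq]
  refine Finset.sum_congr rfl fun m hm => ?_
  rw [Finset.mem_range] at hm
  have hmk : m ≤ k := by omega
  have hcast : ((k - m : ℕ) : ℂ) = (k : ℂ) - m := Nat.cast_sub hmk
  congr 1
  rw [poch_eq_dpoch (c + _), poch_eq_dpoch ((1 + a - c) + _)]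
  congr 2
  · rw [hcast]; ring
  · rw [hcast]; ring

lemma poch_two (a : ℂ) (k : ℕ) :
    poch a (k + k) = 4 ^ k * poch (a / 2) k * poch ((a + 1) / 2) k := by
  induction k with
  | zero => simp [poch]
  | succ k ih =>
    have e : (k + 1) + (k + 1) = (k + k) + 1 + 1 := by omega
    rw [e, poch_succ, poch_succ, poch_succ, poch_succ, ih]
    push_cast
    ring

lemma poch_dup (a : ℂ) (k : ℕ) :
    poch a k * poch (a + k) k = 4 ^ k * poch (a / 2) k * poch ((a + 1) / 2) k := by
  rw [← poch_add]; exact poch_two a k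

lemma tri_sum (n : ℕ) (f : ℕ → ℕ → ℂ) :
    ∑ m ∈ range (n + 1), ∑ t ∈ range (n - m + 1), f m t
      = ∑ k ∈ range (n + 1), ∑ m ∈ range (k + 1), f m (k - m) := by
  rw [Finset.sum_sigma', Finset.sum_sigma']
  refine Finset.sum_nbij' (fun p => ⟨p.1 + p.2, p.1⟩) (fun p => ⟨p.2, p.1 - p.2⟩)
    ?_ ?_ ?_ ?_ ?_
  · rintro ⟨m, t⟩ h
    simp only [Finset.mem_sigma, Finset.mem_range] at h ⊢
    omega
  · rintro ⟨k, m⟩ h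
    simp only [Finset.mem_sigma, Finset.mem_range] at h ⊢
    omega
  · rintro ⟨m, t⟩ h
    simp only [Finset.mem_sigma, Finset.mem_range] at h
    dsimp only
    rw [Nat.add_sub_cancel_left]
  · rintro ⟨k, m⟩ h
    simp only [Finset.mem_sigma, Finset.mem_range] at h
    dsimp only
    have e : m + (k - m) = k := by omega
    rw [e]
  · rintro ⟨m, t⟩ h
    dsimp only
    rw [Nat.add_sub_cancel_left]

set_option maxHeartbeats 1000000 in
theorem stmt_0 (n p q : ℕ) (a c x : ℂ) (A : Fin p → ℂ) (B : Fin q → ℂ)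
    (ha : poch a n ≠ 0) (hac : poch (1 + a - c) n ≠ 0) (hc : poch c n ≠ 0)
    (hB : ∀ j : Fin q, poch (B j) n ≠ 0) :
    ∑ k ∈ range (n + 1),
      (poch (-(n : ℂ)) k * poch (a / 2) k * poch ((a + 1) / 2) k * ∏ j, poch (A j) k) /
        ((Nat.factorial k : ℂ) * poch a k * poch (1 + a - c) k * poch c k *
          ∏ j, poch (B j) k) * x ^ k
    = ∑ m ∈ range (n + 1),
        ((poch (-(n : ℂ)) m * (∏ j, poch (A j) m) * (x / 4) ^ m) /
          ((Nat.factorial m : ℂ) * poch (1 + a - c) m * ∏ j, poch (B j) m)) *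
        ∑ t ∈ range (n - m + 1),
          (poch (-(n : ℂ) + m) t * ∏ j, poch (A j + m) t) /
            ((Nat.factorial t : ℂ) * poch c t * ∏ j, poch (B j + m) t) * (x / 4) ^ t := by
  set F : ℕ → ℕ → ℂ := fun m t =>
    ((poch (-(n : ℂ)) m * (∏ j, poch (A j) m) * (x / 4) ^ m) /
      ((Nat.factorial m : ℂ) * poch (1 + a - c) m * ∏ j, poch (B j) m)) *
    ((poch (-(n : ℂ) + m) t * ∏ j, poch (A j + m) t) /
      ((Nat.factorial t : ℂ) * poch c t * ∏ j, poch (B j + m) t) * (x / 4) ^ t) with hF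
  calc
    ∑ k ∈ range (n + 1),
      (poch (-(n : ℂ)) k * poch (a / 2) k * poch ((a + 1) / 2) k * ∏ j, poch (A j) k) /
        ((Nat.factorial k : ℂ) * poch a k * poch (1 + a - c) k * poch c k *
          ∏ j, poch (B j) k) * x ^ k
      = ∑ k ∈ range (n + 1), ∑ m ∈ range (k + 1), F m (k - m) := by
        refine Finset.sum_congr rfl fun k hk => ?_
        rw [Finset.mem_range] at hk
        have hkn : k ≤ n := by omega
        have hka : poch a k ≠ 0 := poch_ne_zero_of_le hkn ha
        have hkac : poch (1 + a - c) k ≠ 0 := poch_ne_zero_of_le hkn hac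
        have hkc : poch c k ≠ 0 := poch_ne_zero_of_le hkn hc
        have hkB : (∏ j, poch (B j) k) ≠ 0 :=
          Finset.prod_ne_zero_iff.mpr fun j _ => poch_ne_zero_of_le hkn (hB j)
        have hkf : ((Nat.factorial k : ℕ) : ℂ) ≠ 0 :=
          Nat.cast_ne_zero.mpr (Nat.factorial_ne_zero k)
        have step : ∀ m ∈ range (k + 1), F m (k - m) =
            (poch (-(n : ℂ)) k * (∏ j, poch (A j) k) * (x / 4) ^ k /
              ((Nat.factorial k : ℂ) * poch (1 + a - c) k * poch c k * ∏ j, poch (B j) k)) *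
            ((k.choose m : ℂ) *
              (poch (c + ((k - m : ℕ) : ℂ)) m * poch ((1 + a - c) + (m : ℂ)) (k - m))) := by
          intro m hm
          rw [Finset.mem_range] at hm
          obtain ⟨t, rfl⟩ : ∃ t, k = m + t := ⟨k - m, by omega⟩
          rw [Nat.add_sub_cancel_left]
          have hmn : m + t ≤ n := hkn
          have hmf : ((Nat.factorial m : ℕ) : ℂ) ≠ 0 :=
            Nat.cast_ne_zero.mpr (Nat.factorial_ne_zero m)
          have htf : ((Nat.factorial t : ℕ) : ℂ) ≠ 0 :=
            Nat.cast_ne_zero.mpr (Nat.factorial_ne_zero t)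
          have hacm : poch (1 + a - c) m ≠ 0 :=
            poch_ne_zero_of_le (by omega) hac
          have hacmt : poch ((1 + a - c) + (m : ℂ)) t ≠ 0 := poch_shift_ne_zero hmn hac
          have hct : poch c t ≠ 0 := poch_ne_zero_of_le (by omega) hc
          have hctm : poch (c + (t : ℂ)) m ≠ 0 :=
            poch_shift_ne_zero (by omega : t + m ≤ n) hc
          have hBm : (∏ j, poch (B j) m) ≠ 0 :=
            Finset.prod_ne_zero_iff.mpr fun j _ => poch_ne_zero_of_le (by omega) (hB j)
          have hBmt : (∏ j, poch (B j + (m : ℂ)) t) ≠ 0 :=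
            Finset.prod_ne_zero_iff.mpr fun j _ => poch_shift_ne_zero hmn (hB j)
          have hA' : (∏ j, poch (A j) (m + t))
              = (∏ j, poch (A j) m) * ∏ j, poch (A j + (m : ℂ)) t := by
            rw [← Finset.prod_mul_distrib]
            exact Finset.prod_congr rfl fun j _ => poch_add _ m t
          have hB' : (∏ j, poch (B j) (m + t))
              = (∏ j, poch (B j) m) * ∏ j, poch (B j + (m : ℂ)) t := by
            rw [← Finset.prod_mul_distrib]
            exact Finset.prod_congr rfl fun j _ => poch_add _ m t
          have hc' : poch c (m + t) = poch c t * poch (c + (t : ℂ)) m := by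
            rw [add_comm m t, poch_add]
          have hfact : ((Nat.factorial (m + t) : ℕ) : ℂ)
              = ((m + t).choose m : ℂ) * (Nat.factorial m : ℂ) * (Nat.factorial t : ℂ) := by
            rw [← Nat.choose_mul_factorial_mul_factorial (Nat.le_add_right m t),
              Nat.add_sub_cancel_left]
            push_cast
            ring
          rw [hF]
          dsimp only
          rw [poch_add (-(n : ℂ)) m t, poch_add (1 + a - c) m t, hA', hB', hc', hfact, pow_add]
          have hch : ((m + t).choose m : ℂ) ≠ 0 :=
            Nat.cast_ne_zero.mpr (Nat.choose_pos (Nat.le_add_right m t)).ne'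
          set N1 := poch (-(n : ℂ)) m
          set N2 := poch (-(n : ℂ) + (m : ℂ)) t
          set PAm := ∏ j, poch (A j) m
          set PAt := ∏ j, poch (A j + (m : ℂ)) t
          set PBm' := ∏ j, poch (B j) m
          set PBt := ∏ j, poch (B j + (m : ℂ)) t
          set MF := ((Nat.factorial m : ℕ) : ℂ)
          set TF := ((Nat.factorial t : ℕ) : ℂ)
          set CH := (((m + t).choose m : ℕ) : ℂ)
          set ACm := poch (1 + a - c) m
          set ACt := poch ((1 + a - c) + (m : ℂ)) t
          set PCt := poch c t
          set PCtm := poch (c + (t : ℂ)) m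
          have hDL : (MF * ACm * PBm') * (TF * PCt * PBt) ≠ 0 :=
            mul_ne_zero (mul_ne_zero (mul_ne_zero hmf hacm) hBm)
              (mul_ne_zero (mul_ne_zero htf hct) hBmt)
          have hDR : CH * MF * TF * (ACm * ACt) * (PCt * PCtm) * (PBm' * PBt) ≠ 0 :=
            mul_ne_zero (mul_ne_zero (mul_ne_zero (mul_ne_zero (mul_ne_zero hch hmf) htf)
              (mul_ne_zero hacm hacmt)) (mul_ne_zero hct hctm)) (mul_ne_zero hBm hBmt)
          rw [div_mul_eq_mul_div (N2 * PAt) (TF * PCt * PBt) ((x / 4) ^ t), div_mul_div_comm,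
            div_mul_eq_mul_div, div_eq_div_iff hDL hDR]
          ring
        rw [Finset.sum_congr rfl step, ← Finset.mul_sum, poch_conv a c k]
        have hdup := poch_dup a k
        have h4 : ((4 : ℂ)) ^ k ≠ 0 := pow_ne_zero k (by norm_num)
        set N1 := poch (-(n : ℂ)) k
        set PA := ∏ j, poch (A j) k
        set PB := ∏ j, poch (B j) k
        set KF := ((Nat.factorial k : ℕ) : ℂ)
        set P2 := poch (a / 2) k
        set P3 := poch ((a + 1) / 2) k
        set PAk := poch a k
        set PAK := poch (a + (k : ℂ)) k
        set PAC := poch (1 + a - c) k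
        set PC := poch c k
        have hD1 : KF * PAk * PAC * PC * PB ≠ 0 := by
          exact mul_ne_zero (mul_ne_zero (mul_ne_zero (mul_ne_zero hkf hka) hkac) hkc) hkB
        have hD2 : (4 : ℂ) ^ k * (KF * PAC * PC * PB) ≠ 0 := by
          exact mul_ne_zero h4 (mul_ne_zero (mul_ne_zero (mul_ne_zero hkf hkac) hkc) hkB)
        conv_lhs => rw [div_mul_eq_mul_div]
        conv_rhs => rw [div_pow, ← mul_div_assoc, div_div, div_mul_eq_mul_div]
        rw [div_eq_div_iff hD1 hD2]
        linear_combination (-(N1 * PA * x ^ k * KF * PAC * PC * PB)) * hdup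
    _ = ∑ m ∈ range (n + 1), ∑ t ∈ range (n - m + 1), F m t := (tri_sum n F).symm
    _ = _ := Finset.sum_congr rfl fun m _ => (Finset.mul_sum _ _ _).symm
end

section
/- Fix a nonnegative integer n. Let σ₁ : ℂ³ → ℂ³ be the bijection σ₁(a,b,c) = (a, b, 1+a−c) and let σ₂ : ℂ³ → ℂ³ be the bijection σ₂(a,b,c) = (c−b−n, c−a−n, c). Then the subgroup of the group of bijections of ℂ³ generated by σ₁ and σ₂ is isomorphic to the symmetric group S₃ on three letters (a group of order 6). -/
open Equiv

def eAff (n : ℕ) : (ℂ × ℂ × ℂ) ≃ (ℂ × ℂ × ℂ) where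
  toFun x := (x.2.2, 1 + x.1 - x.2.2, 1 - x.2.1 - (n : ℂ))
  invFun y := (y.1 + y.2.1 - 1, 1 - y.2.2 - (n : ℂ), y.1)
  left_inv := by rintro ⟨a, b, c⟩; simp only [Prod.mk.injEq]; exact ⟨by ring, by ring, trivial⟩
  right_inv := by rintro ⟨p, q, r⟩; simp only [Prod.mk.injEq]; exact ⟨trivial, by ring, by ring⟩

def Etriple : (Fin 3 → ℂ) ≃ (ℂ × ℂ × ℂ) where
  toFun f := (f 0, f 1, f 2)
  invFun y := ![y.1, y.2.1, y.2.2]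
  left_inv f := by funext i; fin_cases i <;> simp
  right_inv := by rintro ⟨a, b, c⟩; simp

def permCongrHom {α β : Type*} (q : α ≃ β) : Perm α →* Perm β where
  toFun σ := q.permCongr σ
  map_one' := by ext b; simp [Equiv.permCongr_def]
  map_mul' σ τ := by
    ext b; simp [Equiv.permCongr_def, Equiv.Perm.mul_def]

def arrowHom : Perm (Fin 3) →* Perm (Fin 3 → ℂ) where
  toFun π := Equiv.arrowCongr π (Equiv.refl ℂ)
  map_one' := by ext f; simp; rfl
  map_mul' π ρ := by
    ext f b
    simp [Equiv.arrowCongr, Equiv.Perm.mul_def, Function.comp]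

def Phi (n : ℕ) : Perm (Fin 3) →* Perm (ℂ × ℂ × ℂ) :=
  (_root_.permCongrHom (Etriple.trans (eAff n).symm)).comp arrowHom

theorem stmt_3 (n : ℕ) (σ₁ σ₂ : Equiv.Perm (ℂ × ℂ × ℂ))
    (h₁ : ∀ a b c : ℂ, σ₁ (a, b, c) = (a, b, 1 + a - c))
    (h₂ : ∀ a b c : ℂ, σ₂ (a, b, c) = (c - b - (n : ℂ), c - a - (n : ℂ), c)) :
    Nonempty ((Subgroup.closure {σ₁, σ₂} : Subgroup (Equiv.Perm (ℂ × ℂ × ℂ)))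
      ≃* Equiv.Perm (Fin 3)) := by
  have hσ1 : Phi n (Equiv.swap 0 1) = σ₁ := by
    ext ⟨a, b, c⟩ <;>
    · rw [h₁]
      simp [Phi, _root_.permCongrHom, arrowHom, eAff, Etriple, Equiv.permCongr_def,
    Equiv.arrowCongr, Function.comp, Equiv.swap_apply_def]
      try ring
  have hσ2 : Phi n (Equiv.swap 1 2) = σ₂ := by
    ext ⟨a, b, c⟩ <;>
    · rw [h₂]
      simp [Phi, _root_.permCongrHom, arrowHom, eAff, Etriple, Equiv.permCongr_def,
    Equiv.arrowCongr, Function.comp, Equiv.swap_apply_def]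
      try ring
  -- injectivity of Phi
  have hinj : Function.Injective (Phi n) := by
    intro π ρ h
    have h2 : arrowHom π = arrowHom ρ :=
      ((Etriple.trans (eAff n).symm).permCongr).injective h
    have h3 : ∀ b : Fin 3, (((π.symm b : Fin 3) : ℕ) : ℂ) = (((ρ.symm b : Fin 3) : ℕ) : ℂ) := by
      intro b
      have := congrArg (fun e : Perm (Fin 3 → ℂ) =>
    e (fun j : Fin 3 => ((j : ℕ) : ℂ)) b) h2
      simpa [arrowHom, Equiv.arrowCongr] using this
    have h4 : π.symm = ρ.symm := by
      ext b
      exact_mod_cast h3 b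
    calc π = π.symm.symm := (Equiv.symm_symm π).symm
      _ = ρ.symm.symm := by rw [h4]
      _ = ρ := Equiv.symm_symm ρ
  -- S₃ is generated by the two adjacent transpositions
  have hgen : Subgroup.closure ({Equiv.swap 0 1, Equiv.swap 1 2} : Set (Perm (Fin 3))) = ⊤ := by
    rw [eq_top_iff]
    intro π _
    refine Equiv.Perm.swap_induction_on π (one_mem _) ?_
    intro f x y hxy ih
    refine mul_mem ?_ ih
    have m1 : Equiv.swap (0:Fin 3) 1 ∈ Subgroup.closure ({Equiv.swap 0 1, Equiv.swap 1 2} : Set (Perm (Fin 3))) :=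
      Subgroup.subset_closure (by simp)
    have m2 : Equiv.swap (1:Fin 3) 2 ∈ Subgroup.closure ({Equiv.swap 0 1, Equiv.swap 1 2} : Set (Perm (Fin 3))) :=
      Subgroup.subset_closure (by simp)
    have h02 : Equiv.swap (0:Fin 3) 2 ∈ Subgroup.closure ({Equiv.swap 0 1, Equiv.swap 1 2} : Set (Perm (Fin 3))) := by
      rw [show Equiv.swap (0:Fin 3) 2 = Equiv.swap 0 1 * Equiv.swap 1 2 * Equiv.swap 0 1 by decide]
      exact mul_mem (mul_mem m1 m2) m1
    have m1' : Equiv.swap (1:Fin 3) 0 ∈ Subgroup.closure ({Equiv.swap 0 1, Equiv.swap 1 2} : Set (Perm (Fin 3))) := by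
      rw [Equiv.swap_comm 1 0]; exact m1
    have m2' : Equiv.swap (2:Fin 3) 1 ∈ Subgroup.closure ({Equiv.swap 0 1, Equiv.swap 1 2} : Set (Perm (Fin 3))) := by
      rw [Equiv.swap_comm 2 1]; exact m2
    have h02' : Equiv.swap (2:Fin 3) 0 ∈ Subgroup.closure ({Equiv.swap 0 1, Equiv.swap 1 2} : Set (Perm (Fin 3))) := by
      rw [Equiv.swap_comm 2 0]; exact h02
    fin_cases x <;> fin_cases y <;>
      first
      | exact absurd rfl hxy
      | exact m1
      | exact m2
      | exact h02
      | exact m1'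
      | exact m2'
      | exact h02'
  have hrange : (Phi n).range = Subgroup.closure {σ₁, σ₂} := by
    rw [MonoidHom.range_eq_map, ← hgen, MonoidHom.map_closure, Set.image_insert_eq,
      Set.image_singleton, hσ1, hσ2]
  exact ⟨(MulEquiv.subgroupCongr hrange.symm).trans (MonoidHom.ofInjective hinj).symm⟩
end
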